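/- Let n be a positive integer and let α, β be partial contractions in CP_n. Then α D* β if and only if |im α| = |im β|. -/

import Mathlib

/-- A partial transformation of the chain `[n] = {1,…,n}`, encoded as a map
`ℕ → Option ℕ`: `α x = some y` means `x ∈ dom α` and `xα = y`. -/
def IsPT (n : ℕ) (α : ℕ → Option ℕ) : Prop :=
  ∀ x y, α x = some y → x ∈ Set.Icc 1 n ∧ y ∈ Set.Icc 1 n

/-- Composition of partial transformations: apply `α` first, then `β`. -/
def pcomp (α β : ℕ → Option ℕ) : ℕ → Option ℕ := fun x => (α x).bind β

/-- `α` is a contraction: `|xα − yα| ≤ |x − y|` on its domain. -/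
def IsContraction (α : ℕ → Option ℕ) : Prop :=
  ∀ x y a b, α x = some a → α y = some b → Nat.dist a b ≤ Nat.dist x y

def IsOrderPreserving (α : ℕ → Option ℕ) : Prop :=
  ∀ x y a b, α x = some a → α y = some b → x ≤ y → a ≤ b

def IsOrderReversing (α : ℕ → Option ℕ) : Prop :=
  ∀ x y a b, α x = some a → α y = some b → x ≤ y → b ≤ a

/-- `CP n`: the partial contractions of `[n]`. -/
def CP (n : ℕ) (α : ℕ → Option ℕ) : Prop := IsPT n α ∧ IsContraction α

/-- `OCP n`: the order preserving partial contractions of `[n]`. -/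
def OCP (n : ℕ) (α : ℕ → Option ℕ) : Prop := CP n α ∧ IsOrderPreserving α

/-- `ORCP n`: the order preserving or order reversing partial contractions of `[n]`. -/
def ORCP (n : ℕ) (α : ℕ → Option ℕ) : Prop :=
  CP n α ∧ (IsOrderPreserving α ∨ IsOrderReversing α)

/-- The image of a partial transformation. -/
def img (α : ℕ → Option ℕ) : Set ℕ := {y | ∃ x, α x = some y}

/-- The kernel of a partial transformation:
`{(x,y) ∈ dom α × dom α : xα = yα}`. -/
def pker (α : ℕ → Option ℕ) : Set (ℕ × ℕ) :=
  {p | α p.1 ≠ none ∧ α p.1 = α p.2}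

/-- The starred Green's relation `L*` relative to the class `S`:
`α L* β` iff for all `γ, δ ∈ S`, `αγ = αδ ⟺ βγ = βδ`. -/
def LStar (S : (ℕ → Option ℕ) → Prop) (α β : ℕ → Option ℕ) : Prop :=
  ∀ γ δ, S γ → S δ → (pcomp α γ = pcomp α δ ↔ pcomp β γ = pcomp β δ)

/-- The starred Green's relation `R*` relative to the class `S`:
`α R* β` iff for all `γ, δ ∈ S`, `γα = δα ⟺ γβ = δβ`. -/
def RStar (S : (ℕ → Option ℕ) → Prop) (α β : ℕ → Option ℕ) : Prop :=
  ∀ γ δ, S γ → S δ → (pcomp γ α = pcomp δ α ↔ pcomp γ β = pcomp δ β)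

/-- `D*` relative to `S`: the join of `L*` and `R*`, i.e. the smallest
equivalence relation containing both. -/
def DStar (S : (ℕ → Option ℕ) → Prop) (α β : ℕ → Option ℕ) : Prop :=
  Relation.EqvGen (fun a b => S a ∧ S b ∧ (LStar S a b ∨ RStar S a b)) α β


open Classical in
noncomputable def epsMap (A : Set ℕ) : ℕ → Option ℕ :=
  fun x => if x ∈ A then some x else none

lemma pcomp_left_eq_iff {α γ δ : ℕ → Option ℕ} :
    pcomp α γ = pcomp α δ ↔ ∀ y ∈ img α, γ y = δ y := by
  constructor
  · rintro h y ⟨x, hx⟩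
    have := congrFun h x
    simpa [pcomp, hx] using this
  · intro h
    funext x
    cases hx : α x with
    | none => simp [pcomp, hx]
    | some y =>
      simp only [pcomp, hx, Option.bind_some]
      exact h y ⟨x, hx⟩

lemma lstar_of_img_eq (S : (ℕ → Option ℕ) → Prop) {α β : ℕ → Option ℕ}
    (h : img α = img β) : LStar S α β := by
  intro γ δ _ _
  rw [pcomp_left_eq_iff, pcomp_left_eq_iff, h]

lemma dom_none_of_pker_eq {α β : ℕ → Option ℕ} (h : pker α = pker β) {u : ℕ}
    (hu : α u = none) : β u = none := by
  cases hb : β u with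
  | none => rfl
  | some v =>
    exfalso
    have : (u, u) ∈ pker β := ⟨by simp [hb], rfl⟩
    rw [← h] at this
    exact this.1 hu

lemma pcomp_right_congr {α β : ℕ → Option ℕ} (h : pker α = pker β)
    {γ δ : ℕ → Option ℕ} (hc : pcomp γ α = pcomp δ α) : pcomp γ β = pcomp δ β := by
  funext x
  have hx := congrFun hc x
  simp only [pcomp] at hx ⊢
  cases hγ : γ x with
  | none =>
    cases hδ : δ x with
    | none => rfl
    | some w =>
      simp only [hγ, hδ, Option.bind_none, Option.bind_some] at hx ⊢
      exact (dom_none_of_pker_eq h hx.symm).symm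
  | some u =>
    cases hδ : δ x with
    | none =>
      simp only [hγ, hδ, Option.bind_none, Option.bind_some] at hx ⊢
      exact dom_none_of_pker_eq h hx
    | some w =>
      simp only [hγ, hδ, Option.bind_some] at hx ⊢
      cases hau : α u with
      | none =>
        have haw : α w = none := by rw [← hx]; exact hau
        rw [dom_none_of_pker_eq h hau, dom_none_of_pker_eq h haw]
      | some v =>
        have : (u, w) ∈ pker α := ⟨by simp [hau], hx⟩
        rw [h] at this
        exact this.2

lemma rstar_of_pker_eq (S : (ℕ → Option ℕ) → Prop) {α β : ℕ → Option ℕ}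
    (h : pker α = pker β) : RStar S α β := by
  intro γ δ _ _
  exact ⟨pcomp_right_congr h, pcomp_right_congr h.symm⟩

lemma img_sub_Icc {n : ℕ} {α : ℕ → Option ℕ} (hα : CP n α) : img α ⊆ Set.Icc 1 n := by
  rintro y ⟨x, hx⟩
  exact (hα.1 x y hx).2

lemma epsMap_apply_mem {A : Set ℕ} {x : ℕ} (h : x ∈ A) : epsMap A x = some x := by
  simp [epsMap, h]

lemma epsMap_eq_some {A : Set ℕ} {x y : ℕ} (h : epsMap A x = some y) :
    x ∈ A ∧ y = x := by
  unfold epsMap at h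
  split at h
  · exact ⟨by assumption, (Option.some_inj.mp h).symm⟩
  · exact absurd h (by simp)

lemma cp_epsMap {n : ℕ} {A : Set ℕ} (hA : A ⊆ Set.Icc 1 n) : CP n (epsMap A) := by
  constructor
  · intro x y h
    obtain ⟨hx, hy⟩ := epsMap_eq_some h
    exact ⟨hA hx, hy ▸ hA hx⟩
  · intro x y a b hx hy
    obtain ⟨_, ha⟩ := epsMap_eq_some hx
    obtain ⟨_, hb⟩ := epsMap_eq_some hy
    subst ha; subst hb; exact le_rfl

lemma img_epsMap (A : Set ℕ) : img (epsMap A) = A := by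
  ext y
  constructor
  · rintro ⟨x, hx⟩
    obtain ⟨hx1, hx2⟩ := epsMap_eq_some hx
    exact hx2 ▸ hx1
  · intro hy
    exact ⟨y, epsMap_apply_mem hy⟩

lemma pker_epsMap (A : Set ℕ) : pker (epsMap A) = {p | p.1 ∈ A ∧ p.1 = p.2} := by
  ext ⟨x, y⟩
  constructor
  · rintro ⟨h1, h2⟩
    cases hx : epsMap A x with
    | none => exact absurd hx h1
    | some a =>
      obtain ⟨hxA, ha⟩ := epsMap_eq_some hx
      subst ha
      rw [hx] at h2
      obtain ⟨hyA, hb⟩ := epsMap_eq_some h2.symm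
      exact ⟨hxA, hb⟩
  · rintro ⟨h1, h2⟩
    dsimp only at h1 h2 ⊢
    refine ⟨by simp [epsMap_apply_mem h1], ?_⟩
    subst h2; rfl

lemma pcomp_epsMap_right {α : ℕ → Option ℕ} {A : Set ℕ} (h : img α ⊆ A) :
    pcomp α (epsMap A) = α := by
  funext x
  cases hx : α x with
  | none => simp [pcomp, hx]
  | some y =>
    simp only [pcomp, hx, Option.bind_some]
    exact epsMap_apply_mem (h ⟨x, hx⟩)

lemma img_subset_of_lstar {n : ℕ} {α β : ℕ → Option ℕ} (hα : CP n α) (hβ : CP n β)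
    (h : LStar (CP n) α β) : img β ⊆ img α := by
  have h1 : pcomp α (epsMap (Set.Icc 1 n)) = pcomp α (epsMap (img α)) := by
    rw [pcomp_epsMap_right (img_sub_Icc hα), pcomp_epsMap_right subset_rfl]
  have h2 := (h _ _ (cp_epsMap subset_rfl) (cp_epsMap (img_sub_Icc hα))).mp h1
  rintro y ⟨x, hx⟩
  have := congrFun h2 x
  simp only [pcomp, hx, Option.bind_some] at this
  rw [epsMap_apply_mem (img_sub_Icc hβ ⟨x, hx⟩)] at this
  obtain ⟨hy, _⟩ := epsMap_eq_some this.symm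
  exact hy

lemma img_eq_of_lstar {n : ℕ} {α β : ℕ → Option ℕ} (hα : CP n α) (hβ : CP n β)
    (h : LStar (CP n) α β) : img α = img β := by
  have hsymm : LStar (CP n) β α := fun γ δ hγ hδ => (h γ δ hγ hδ).symm
  exact Set.Subset.antisymm (img_subset_of_lstar hβ hα hsymm) (img_subset_of_lstar hα hβ h)

open Classical in
noncomputable def cstMap (n u : ℕ) : ℕ → Option ℕ :=
  fun x => if x ∈ Set.Icc 1 n then some u else none

def zeroMap : ℕ → Option ℕ := fun _ => none

lemma cp_cstMap {n u : ℕ} (hu : u ∈ Set.Icc 1 n) : CP n (cstMap n u) := by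
  constructor
  · intro x y h
    unfold cstMap at h
    split at h
    · exact ⟨by assumption, (Option.some_inj.mp h) ▸ hu⟩
    · exact absurd h (by simp)
  · intro x y a b hx hy
    unfold cstMap at hx hy
    split at hx
    · split at hy
      · rw [← Option.some_inj.mp hx, ← Option.some_inj.mp hy]
        simp [Nat.dist_self]
      · exact absurd hy (by simp)
    · exact absurd hx (by simp)

lemma cp_zeroMap {n : ℕ} : CP n zeroMap :=
  ⟨fun x y h => absurd h (by simp [zeroMap]), fun x y a b hx => absurd hx (by simp [zeroMap])⟩

lemma pker_subset_of_rstar {n : ℕ} {α β : ℕ → Option ℕ} (hn : 0 < n)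
    (hα : CP n α) (h : RStar (CP n) α β) : pker α ⊆ pker β := by
  rintro ⟨u, w⟩ ⟨h1, h2⟩
  dsimp only at h1 h2 ⊢
  cases hv : α u with
  | none => exact absurd hv h1
  | some v =>
  have hw : α w = some v := by rw [← h2]; exact hv
  have hu : u ∈ Set.Icc 1 n := (hα.1 u v hv).1
  have hwm : w ∈ Set.Icc 1 n := (hα.1 w v hw).1
  have h1n : (1 : ℕ) ∈ Set.Icc 1 n := Set.mem_Icc.mpr ⟨le_rfl, hn⟩
  -- β u ≠ none
  have hbu : β u ≠ none := by
    intro hbu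
    have hne : pcomp (cstMap n u) α ≠ pcomp zeroMap α := by
      intro he
      have := congrFun he 1
      simp [pcomp, cstMap, zeroMap, h1n, hv] at this
    apply hne
    apply (h _ _ (cp_cstMap hu) cp_zeroMap).mpr
    funext x
    simp only [pcomp, cstMap, zeroMap, Option.bind_none]
    split
    · simpa using hbu
    · rfl
  -- β u = β w
  have heq : pcomp (cstMap n u) α = pcomp (cstMap n w) α := by
    funext x
    simp only [pcomp, cstMap]
    split
    · simp [hv, hw]
    · rfl
  have heq2 := (h _ _ (cp_cstMap hu) (cp_cstMap hwm)).mp heq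
  have := congrFun heq2 1
  simp only [pcomp, cstMap, h1n, if_pos, Option.bind_some] at this
  exact ⟨hbu, this⟩

open Classical in
lemma ncard_img_eq_of_pker_eq {α β : ℕ → Option ℕ} (h : pker α = pker β) :
    (img α).ncard = (img β).ncard := by
  classical
  set F : ℕ → ℕ := fun y => if h' : ∃ x, α x = some y then (β h'.choose).getD 0 else 0 with hF
  have key : ∀ y ∈ img α, ∃ x z, α x = some y ∧ β x = some z ∧ F y = z := by
    rintro y hy
    have hx : α hy.choose = some y := hy.choose_spec
    have hmem : (hy.choose, hy.choose) ∈ pker α := ⟨by simp [hx], rfl⟩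
    rw [h] at hmem
    cases hz : β hy.choose with
    | none => exact absurd hz hmem.1
    | some z =>
      refine ⟨hy.choose, z, hx, hz, ?_⟩
      rw [hF]
      simp only [hz, Option.getD_some]
      exact dif_pos hy
  have hinj : Set.InjOn F (img α) := by
    intro y1 hy1 y2 hy2 hFeq
    obtain ⟨x1, z1, ha1, hb1, hf1⟩ := key y1 hy1
    obtain ⟨x2, z2, ha2, hb2, hf2⟩ := key y2 hy2
    have hz : z1 = z2 := by rw [← hf1, ← hf2, hFeq]
    have : (x1, x2) ∈ pker β := ⟨by simp [hb1], by rw [hb1, hb2, hz]⟩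
    rw [← h] at this
    have := this.2
    rw [ha1, ha2] at this
    exact Option.some_inj.mp this
  have himg : F '' (img α) = img β := by
    ext z
    constructor
    · rintro ⟨y, hy, rfl⟩
      obtain ⟨x, z', _, hb, hf⟩ := key y hy
      exact hf ▸ ⟨x, hb⟩
    · rintro ⟨x, hx⟩
      have hmem : (x, x) ∈ pker β := ⟨by simp [hx], rfl⟩
      rw [← h] at hmem
      cases hax : α x with
      | none => exact absurd hax hmem.1
      | some y =>
        have hy : y ∈ img α := ⟨x, hax⟩
        obtain ⟨x', z', ha', hb', hf'⟩ := key y hy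
        have : (x', x) ∈ pker α := ⟨by simp [ha'], by rw [ha', hax]⟩
        rw [h] at this
        have hb := this.2
        rw [hb', hx] at hb
        exact ⟨y, hy, by rw [hf', Option.some_inj.mp hb]⟩
  rw [← himg, Set.ncard_image_of_injOn hinj]

lemma fin_strictMono_key {k : ℕ} {f : Fin k → ℕ} (hf : StrictMono f) :
    ∀ (d : ℕ) (i j : Fin k), (j : ℕ) = (i : ℕ) + d → (j : ℕ) + f i ≤ (i : ℕ) + f j := by
  intro d
  induction d with
  | zero =>
    intro i j hj
    have : i = j := Fin.ext (by omega)
    subst this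
    omega
  | succ d ih =>
    intro i j hj
    have hlt : (i : ℕ) + d < k := by have := j.isLt; omega
    have h1 := ih i ⟨(i : ℕ) + d, hlt⟩ rfl
    have h2 : f ⟨(i : ℕ) + d, hlt⟩ < f j := hf (by rw [Fin.lt_def]; dsimp; omega)
    have h3 : ((⟨(i : ℕ) + d, hlt⟩ : Fin k) : ℕ) = (i : ℕ) + d := rfl
    rw [h3] at h1
    omega

lemma fin_strictMono_dist {k : ℕ} {f : Fin k → ℕ} (hf : StrictMono f) (i j : Fin k) :
    Nat.dist (i : ℕ) (j : ℕ) ≤ Nat.dist (f i) (f j) := by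
  rcases le_total (i : ℕ) (j : ℕ) with hij | hij
  · have hle : i ≤ j := by rwa [Fin.le_def]
    have h1 := fin_strictMono_key hf ((j : ℕ) - (i : ℕ)) i j (by omega)
    have h2 : f i ≤ f j := hf.monotone hle
    rw [Nat.dist_eq_sub_of_le hij, Nat.dist_eq_sub_of_le h2]
    omega
  · have hle : j ≤ i := by rwa [Fin.le_def]
    have h1 := fin_strictMono_key hf ((i : ℕ) - (j : ℕ)) j i (by omega)
    have h2 : f j ≤ f i := hf.monotone hle
    rw [Nat.dist_comm, Nat.dist_eq_sub_of_le hij, Nat.dist_comm (f i), Nat.dist_eq_sub_of_le h2]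
    omega

noncomputable def rankMap (F : Finset ℕ) : ℕ → Option ℕ :=
  fun x => if h : x ∈ F then some (((F.orderIsoOfFin rfl).symm ⟨x, h⟩ : Fin F.card) + 1) else none

lemma rankMap_iso_strictMono (F : Finset ℕ) :
    StrictMono (fun i : Fin F.card => ((F.orderIsoOfFin rfl) i : ℕ)) := by
  intro i j hij
  exact (F.orderIsoOfFin rfl).strictMono hij

lemma rankMap_eq_some {F : Finset ℕ} {x y : ℕ} (h : rankMap F x = some y) :
    ∃ (hx : x ∈ F), y = ((F.orderIsoOfFin rfl).symm ⟨x, hx⟩ : Fin F.card) + 1 := by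
  unfold rankMap at h
  split at h
  · exact ⟨by assumption, (Option.some_inj.mp h).symm⟩
  · exact absurd h (by simp)

lemma cp_rankMap {n : ℕ} {F : Finset ℕ} (hF : ∀ x ∈ F, x ∈ Set.Icc 1 n)
    (hcard : F.card ≤ n) : CP n (rankMap F) := by
  constructor
  · intro x y h
    obtain ⟨hx, hy⟩ := rankMap_eq_some h
    refine ⟨hF x hx, ?_⟩
    have := ((F.orderIsoOfFin rfl).symm ⟨x, hx⟩).isLt
    rw [Set.mem_Icc]
    omega
  · intro x y a b hx hy
    obtain ⟨hxF, ha⟩ := rankMap_eq_some hx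
    obtain ⟨hyF, hb⟩ := rankMap_eq_some hy
    subst ha; subst hb
    rw [Nat.dist_add_add_right]
    set iso := F.orderIsoOfFin rfl
    set i := iso.symm ⟨x, hxF⟩
    set j := iso.symm ⟨y, hyF⟩
    have hxi : x = ((iso i : {z // z ∈ F}) : ℕ) := by simp [i]
    have hyj : y = ((iso j : {z // z ∈ F}) : ℕ) := by simp [j]
    rw [hxi, hyj]
    exact fin_strictMono_dist (rankMap_iso_strictMono F) i j

lemma img_rankMap (F : Finset ℕ) : img (rankMap F) = Set.Icc 1 F.card := by
  ext y
  constructor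
  · rintro ⟨x, hx⟩
    obtain ⟨hxF, hy⟩ := rankMap_eq_some hx
    have := ((F.orderIsoOfFin rfl).symm ⟨x, hxF⟩).isLt
    rw [Set.mem_Icc]
    omega
  · intro hy
    rw [Set.mem_Icc] at hy
    set iso := F.orderIsoOfFin rfl
    set i : Fin F.card := ⟨y - 1, by omega⟩ with hi
    refine ⟨((iso i : {z // z ∈ F}) : ℕ), ?_⟩
    have hmem : ((iso i : {z // z ∈ F}) : ℕ) ∈ F := (iso i).2
    unfold rankMap
    rw [dif_pos hmem]
    have : (⟨((iso i : {z // z ∈ F}) : ℕ), hmem⟩ : {z // z ∈ F}) = iso i := rfl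
    rw [this]
    simp [hi, iso]
    omega
  
lemma pker_rankMap (F : Finset ℕ) : pker (rankMap F) = {p | p.1 ∈ F ∧ p.1 = p.2} := by
  ext ⟨x, y⟩
  constructor
  · rintro ⟨h1, h2⟩
    dsimp only at h1 h2 ⊢
    cases hx : rankMap F x with
    | none => exact absurd hx h1
    | some a =>
      rw [hx] at h2
      obtain ⟨hxF, ha⟩ := rankMap_eq_some hx
      obtain ⟨hyF, hb⟩ := rankMap_eq_some h2.symm
      refine ⟨hxF, ?_⟩
      have hvals : (((F.orderIsoOfFin rfl).symm ⟨x, hxF⟩ : Fin F.card) : ℕ) = (((F.orderIsoOfFin rfl).symm ⟨y, hyF⟩ : Fin F.card) : ℕ) := by omega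
      have := congrArg (F.orderIsoOfFin rfl) (Fin.ext hvals)
      simp only [OrderIso.apply_symm_apply] at this
      exact congrArg Subtype.val this
  · rintro ⟨h1, h2⟩
    dsimp only at h1 h2 ⊢
    subst h2
    exact ⟨by simp [rankMap, h1], rfl⟩

/-- Theorem 2.1(iv) for `CP n`: `α D* β` iff `|im α| = |im β|`. -/
theorem dstar_iff_card_img_eq_CP (n : ℕ) (hn : 0 < n) (α β : ℕ → Option ℕ)
    (hα : CP n α) (hβ : CP n β) :
    DStar (CP n) α β ↔ (img α).ncard = (img β).ncard := by
  constructor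
  · intro h
    unfold DStar at h
    clear hα hβ
    induction h with
    | rel a b hab =>
      obtain ⟨ha, hb, hor⟩ := hab
      rcases hor with hl | hr
      · rw [img_eq_of_lstar ha hb hl]
      · have h1 := pker_subset_of_rstar hn ha hr
        have h2 := pker_subset_of_rstar hn hb (fun γ δ hγ hδ => (hr γ δ hγ hδ).symm)
        exact ncard_img_eq_of_pker_eq (Set.Subset.antisymm h1 h2)
    | refl a => rfl
    | symm a b _ ih => exact ih.symm
    | trans a b c _ _ ih1 ih2 => exact ih1.trans ih2
  · intro hcard
    have hAsub : img α ⊆ Set.Icc 1 n := img_sub_Icc hα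
    have hBsub : img β ⊆ Set.Icc 1 n := img_sub_Icc hβ
    have hAfin : (img α).Finite := (Set.finite_Icc 1 n).subset hAsub
    have hBfin : (img β).Finite := (Set.finite_Icc 1 n).subset hBsub
    have hcardA : (img α).ncard = hAfin.toFinset.card := Set.ncard_eq_toFinset_card _ hAfin
    have hcardB : (img β).ncard = hBfin.toFinset.card := Set.ncard_eq_toFinset_card _ hBfin
    have hk : hAfin.toFinset.card = hBfin.toFinset.card := by
      rw [← hcardA, ← hcardB, hcard]
    have hIccn : (Set.Icc 1 n).ncard = n := by
      rw [← Finset.coe_Icc, Set.ncard_coe_finset, Nat.card_Icc]; omega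
    have hFAmem : ∀ x ∈ hAfin.toFinset, x ∈ Set.Icc 1 n := fun x hx =>
      hAsub (hAfin.mem_toFinset.mp hx)
    have hFBmem : ∀ x ∈ hBfin.toFinset, x ∈ Set.Icc 1 n := fun x hx =>
      hBsub (hBfin.mem_toFinset.mp hx)
    have hFAcard : hAfin.toFinset.card ≤ n := by
      have := Set.ncard_le_ncard hAsub (Set.finite_Icc 1 n)
      omega
    have hFBcard : hBfin.toFinset.card ≤ n := by
      have := Set.ncard_le_ncard hBsub (Set.finite_Icc 1 n)
      omega
    have cpEA : CP n (epsMap (img α)) := cp_epsMap hAsub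
    have cpEB : CP n (epsMap (img β)) := cp_epsMap hBsub
    have cpGA : CP n (rankMap hAfin.toFinset) := cp_rankMap hFAmem hFAcard
    have cpGB : CP n (rankMap hBfin.toFinset) := cp_rankMap hFBmem hFBcard
    have pkA : pker (epsMap (img α)) = pker (rankMap hAfin.toFinset) := by
      rw [pker_epsMap, pker_rankMap]
      ext p
      simp [Set.Finite.mem_toFinset]
    have pkB : pker (epsMap (img β)) = pker (rankMap hBfin.toFinset) := by
      rw [pker_epsMap, pker_rankMap]
      ext p
      simp [Set.Finite.mem_toFinset]
    set gen := fun a b => CP n a ∧ CP n b ∧ (LStar (CP n) a b ∨ RStar (CP n) a b) with hgen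
    have s1 : gen α (epsMap (img α)) :=
      ⟨hα, cpEA, Or.inl (lstar_of_img_eq _ (img_epsMap (img α)).symm)⟩
    have s2 : gen (epsMap (img α)) (rankMap hAfin.toFinset) :=
      ⟨cpEA, cpGA, Or.inr (rstar_of_pker_eq _ pkA)⟩
    have s3 : gen (rankMap hAfin.toFinset) (rankMap hBfin.toFinset) :=
      ⟨cpGA, cpGB, Or.inl (lstar_of_img_eq _ (by rw [img_rankMap, img_rankMap, hk]))⟩
    have s4 : gen (rankMap hBfin.toFinset) (epsMap (img β)) :=
      ⟨cpGB, cpEB, Or.inr (rstar_of_pker_eq _ pkB.symm)⟩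
    have s5 : gen (epsMap (img β)) β :=
      ⟨cpEB, hβ, Or.inl (lstar_of_img_eq _ (img_epsMap (img β)))⟩
    exact Relation.EqvGen.trans _ _ _ (Relation.EqvGen.rel _ _ s1)
      (Relation.EqvGen.trans _ _ _ (Relation.EqvGen.rel _ _ s2)
        (Relation.EqvGen.trans _ _ _ (Relation.EqvGen.rel _ _ s3)
          (Relation.EqvGen.trans _ _ _ (Relation.EqvGen.rel _ _ s4)
            (Relation.EqvGen.rel _ _ s5))))
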